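/- For every d > 0: (i) G tends to +∞ at the infinite point of (0,∞)², i.e., for every M > 0 the sublevel set {(x,y) ∈ (0,∞)² : G(x,y) ≤ M} is compact; (ii) the only critical point of G in (0,∞)² (the only point where both partial derivatives of G vanish) is L = (ℓ,ℓ); (iii) G attains at L its strict global minimum K_m = (4ℓ + 3d)/ℓ² = 3ℓ + 1/ℓ, and K_m > 4. -/

import Mathlib

noncomputable def Gf (d : ℝ) (p : ℝ × ℝ) : ℝ :=
  p.1 + p.2 + 1 / p.1 + 1 / p.2 + d / (p.1 * p.2)

/-- (i) every sublevel set of `G` in `(0,∞)²` is compact ("`G → +∞` at the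
infinite point"); (ii) the unique critical point of `G` in `(0,∞)²` is `L = (ℓ,ℓ)`;
(iii) `G` attains at `L` its strict global minimum `K_m = (4ℓ+3d)/ℓ² = 3ℓ + 1/ℓ > 4`. -/
theorem stmt_3 (d l : ℝ) (hd : 0 < d) (hl : 0 < l) (hl3 : l ^ 3 - l - d = 0) :
    (∀ M : ℝ, 0 < M → IsCompact {p : ℝ × ℝ | 0 < p.1 ∧ 0 < p.2 ∧ Gf d p ≤ M}) ∧
    (∀ x y : ℝ, 0 < x → 0 < y →
      ((deriv (fun s : ℝ => Gf d (s, y)) x = 0 ∧ deriv (fun s : ℝ => Gf d (x, s)) y = 0) ↔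
        (x = l ∧ y = l))) ∧
    Gf d (l, l) = (4 * l + 3 * d) / l ^ 2 ∧
    (4 * l + 3 * d) / l ^ 2 = 3 * l + 1 / l ∧
    3 * l + 1 / l > 4 ∧
    (∀ p : ℝ × ℝ, 0 < p.1 → 0 < p.2 → p ≠ (l, l) → Gf d (l, l) < Gf d p) := by
  have hl1 : 1 < l := by nlinarith [mul_pos hl hl]
  refine ⟨?_, ?_, ?_, ?_, ?_, ?_⟩
  · -- (i) compact sublevel sets
    intro M hM
    set K : Set (ℝ × ℝ) := Set.Icc (1/M) M ×ˢ Set.Icc (1/M) M with hK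
    have hKc : IsCompact K := isCompact_Icc.prod isCompact_Icc
    have hmem : ∀ p : ℝ × ℝ, p ∈ K → 0 < p.1 ∧ 0 < p.2 := by
      intro p hp
      obtain ⟨⟨h1, _⟩, ⟨h2, _⟩⟩ := hp
      exact ⟨lt_of_lt_of_le (by positivity) h1, lt_of_lt_of_le (by positivity) h2⟩
    have hcont : ContinuousOn (Gf d) K := by
      intro p hp
      obtain ⟨hp1, hp2⟩ := hmem p hp
      apply ContinuousAt.continuousWithinAt
      have h1 : ContinuousAt (fun p : ℝ × ℝ => p.1) p := continuous_fst.continuousAt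
      have h2 : ContinuousAt (fun p : ℝ × ℝ => p.2) p := continuous_snd.continuousAt
      exact ((((h1.add h2).add ((continuousAt_const (y := (1:ℝ))).div h1 hp1.ne')).add
        ((continuousAt_const (y := (1:ℝ))).div h2 hp2.ne')).add
        ((continuousAt_const (y := d)).div (h1.mul h2) (by positivity)))
    have hsub : {p : ℝ × ℝ | 0 < p.1 ∧ 0 < p.2 ∧ Gf d p ≤ M} ⊆ K := by
      rintro ⟨x, y⟩ ⟨hx, hy, hG⟩
      have hd1 : 0 < d / (x * y) := by positivity
      have h1x : 0 < 1 / x := by positivity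
      have h1y : 0 < 1 / y := by positivity
      have hGxy : x + y + 1 / x + 1 / y + d / (x * y) ≤ M := hG
      have h1xM : 1 / x ≤ M := by linarith
      have h1yM : 1 / y ≤ M := by linarith
      have hxl : 1 / M ≤ x := by
        rw [div_le_iff₀ hM]; rw [div_le_iff₀ hx] at h1xM; nlinarith
      have hyl : 1 / M ≤ y := by
        rw [div_le_iff₀ hM]; rw [div_le_iff₀ hy] at h1yM; nlinarith
      exact ⟨⟨hxl, by linarith⟩, ⟨hyl, by linarith⟩⟩
    have hSeq : {p : ℝ × ℝ | 0 < p.1 ∧ 0 < p.2 ∧ Gf d p ≤ M} = K ∩ Gf d ⁻¹' Set.Iic M := by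
      ext p
      constructor
      · intro hp; exact ⟨hsub hp, hp.2.2⟩
      · rintro ⟨hpK, hpG⟩
        obtain ⟨h1, h2⟩ := hmem p hpK
        exact ⟨h1, h2, hpG⟩
    rw [hSeq]
    exact hKc.of_isClosed_subset
      (hcont.preimage_isClosed_of_isClosed hKc.isClosed isClosed_Iic) Set.inter_subset_left
  · -- (ii) unique critical point
    intro x y hx hy
    have hfx : (fun s : ℝ => Gf d (s, y)) = fun s => s + y + s⁻¹ + 1/y + (d/y) * s⁻¹ := by
      funext s; simp only [Gf]; ring
    have hfy : (fun s : ℝ => Gf d (x, s)) = fun s => x + s + 1/x + s⁻¹ + (d/x) * s⁻¹ := by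
      funext s; simp only [Gf]; ring
    have hdx : HasDerivAt (fun s : ℝ => s + y + s⁻¹ + 1/y + (d/y) * s⁻¹)
        (1 + -(x^2)⁻¹ + (d/y) * -(x^2)⁻¹) x :=
      ((((hasDerivAt_id x).add_const y).add (hasDerivAt_inv hx.ne')).add_const
        (1/y)).add ((hasDerivAt_inv hx.ne').const_mul (d/y))
    have hdy : HasDerivAt (fun s : ℝ => x + s + 1/x + s⁻¹ + (d/x) * s⁻¹)
        (1 + -(y^2)⁻¹ + (d/x) * -(y^2)⁻¹) y :=
      ((((hasDerivAt_id y).const_add x).add_const (1/x)).add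
        (hasDerivAt_inv hy.ne')).add ((hasDerivAt_inv hy.ne').const_mul (d/x))
    have hDx : deriv (fun s : ℝ => Gf d (s, y)) x = 1 - (x^2)⁻¹ - (d/y) * (x^2)⁻¹ := by
      rw [hfx, hdx.deriv]; ring
    have hDy : deriv (fun s : ℝ => Gf d (x, s)) y = 1 - (y^2)⁻¹ - (d/x) * (y^2)⁻¹ := by
      rw [hfy, hdy.deriv]; ring
    rw [hDx, hDy]
    constructor
    · rintro ⟨e1, e2⟩
      have heq1 : x^2 * y - y - d = 0 := by
        field_simp at e1
        apply mul_left_cancel₀ (show (x:ℝ)^2 ≠ 0 by positivity)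
        linear_combination x^2 * e1
      have heq2 : x * y^2 - x - d = 0 := by
        field_simp at e2
        apply mul_left_cancel₀ (show (y:ℝ)^2 ≠ 0 by positivity)
        linear_combination y^2 * e2
      have hxy : x = y := by
        have hfac : (x - y) * (x * y + 1) = 0 := by linear_combination heq1 - heq2
        have : x * y + 1 > 0 := by positivity
        rcases mul_eq_zero.mp hfac with h | h
        · linarith
        · linarith
      have hx3 : x^3 - x - d = 0 := by
        rw [hxy] at heq1 ⊢; linear_combination heq1
      have hx1 : 1 < x := by nlinarith [mul_pos hx hx]
      have hxl : x = l := by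
        have hfac : (x - l) * (x^2 + x*l + l^2 - 1) = 0 := by linear_combination hx3 - hl3
        have hpos : x^2 + x*l + l^2 - 1 > 0 := by nlinarith
        rcases mul_eq_zero.mp hfac with h | h
        · linarith
        · linarith
      exact ⟨hxl, hxy ▸ hxl⟩
    · rintro ⟨h1, h2⟩
      rw [h1, h2]
      have hl0 : l ≠ 0 := hl.ne'
      have hdl : d = l^3 - l := by linarith
      constructor
      · rw [hdl]; field_simp; ring
      · rw [hdl]; field_simp; ring
  · -- value at (l,l)
    have hl0 : l ≠ 0 := hl.ne'
    have hdl : d = l^3 - l := by linarith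
    simp only [Gf]
    rw [hdl]
    field_simp
    ring
  · -- (4l+3d)/l² = 3l + 1/l
    have hl0 : l ≠ 0 := hl.ne'
    have hdl : d = l^3 - l := by linarith
    rw [hdl]
    field_simp
    ring
  · -- 3l + 1/l > 4
    have h1l : 0 < 1 / l := by positivity
    have : l * (1/l) = 1 := mul_one_div_cancel hl.ne'
    nlinarith [sq_nonneg (l - 1)]
  · -- strict global minimum
    rintro ⟨x, y⟩ hx hy hne
    simp only at hx hy
    have hxyne : x ≠ l ∨ y ≠ l := by
      by_contra h
      push_neg at h
      exact hne (by simp [Prod.ext_iff, h.1, h.2])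
    obtain ⟨u, hu0, hux⟩ : ∃ u : ℝ, 0 < u ∧ u^2 = x :=
      ⟨Real.sqrt x, Real.sqrt_pos.mpr hx, Real.sq_sqrt hx.le⟩
    obtain ⟨v, hv0, hvy⟩ : ∃ v : ℝ, 0 < v ∧ v^2 = y :=
      ⟨Real.sqrt y, Real.sqrt_pos.mpr hy, Real.sq_sqrt hy.le⟩
    have hdl : d = l^3 - l := by linarith
    have hQid : l*(x^2*y + x*y^2 + x + y + d) - (3*l^2+1)*x*y
        = l*(u^2*v^2+1)*(u-v)^2 + (u*v-l)^2*(2*l*(u*v) + l^2-1) := by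
      rw [← hux, ← hvy, hdl]; ring
    have hQpos : 0 < l*(x^2*y + x*y^2 + x + y + d) - (3*l^2+1)*x*y := by
      rw [hQid]
      by_cases huv : u = v
      · have hxy : x = y := by rw [← hux, ← hvy, huv]
        have hxl : x ≠ l := by
          rcases hxyne with h | h
          · exact h
          · rw [hxy]; exact h
        have h1 : u * v - l ≠ 0 := by
          rw [← huv, ← sq, hux]
          exact sub_ne_zero.mpr hxl
        have h2 : 0 < (u*v-l)^2 * (2*l*(u*v) + l^2-1) :=
          mul_pos (sq_pos_of_ne_zero h1) (by nlinarith [mul_pos hu0 hv0])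
        linarith [mul_nonneg (mul_nonneg hl.le (by positivity : (0:ℝ) ≤ u^2*v^2+1)) (sq_nonneg (u-v))]
      · have h1 : 0 < l*(u^2*v^2+1)*(u-v)^2 :=
          mul_pos (by positivity) (sq_pos_of_ne_zero (sub_ne_zero.mpr huv))
        have h2 : 0 ≤ (u*v-l)^2 * (2*l*(u*v) + l^2-1) :=
          mul_nonneg (sq_nonneg _) (by nlinarith [mul_pos hu0 hv0])
        linarith
    have hrw : Gf d (x, y) - Gf d (l, l)
        = (l*(x^2*y + x*y^2 + x + y + d) - (3*l^2+1)*x*y) / (x*y*l) := by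
      simp only [Gf]
      rw [hdl]
      field_simp
      ring
    have : 0 < Gf d (x, y) - Gf d (l, l) := by
      rw [hrw]
      exact div_pos hQpos (by positivity)
    linarith
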